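/- Let G be a group, h ∈ G, ι_h : C_•(ℂZ_h)_{[h]} → C_•(ℂG)_{[h]} the inclusion and π_h the retraction defined from a section s of Z_h\G with s(Z_h) = 1. Then π_h is a chain map: b ∘ π_h = π_h ∘ b, where b is the Hochschild boundary; in particular, when verifying the last (cyclic) term one must use the representation g_n g_0 g_1 ⋯ g_{n-1} = (r g_n⁻¹)⁻¹ h (r g_n⁻¹) for the conjugator of the cyclically permuted tuple. -/

import Mathlib

/-- Merge the entries at positions `j` and `j+1` of a list. -/
def mergeAt {G : Type*} [Group G] (l : List G) (j : ℕ) : List G :=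
  l.take j ++ (l.getD j 1 * l.getD (j + 1) 1) :: l.drop (j + 2)

/-- The cyclic last face of the Hochschild boundary. -/
def cyc {G : Type*} [Group G] (l : List G) : List G :=
  (l.getLastD 1 * l.headD 1) :: l.tail.dropLast

/-- The Hochschild boundary `b` of a basis tuple. -/
noncomputable def hb {G : Type*} [Group G] (l : List G) : List G →₀ ℂ :=
  (∑ j ∈ Finset.range (l.length - 1), ((-1 : ℂ) ^ j) • Finsupp.single (mergeAt l j) 1)
    + ((-1 : ℂ) ^ (l.length - 1)) • Finsupp.single (cyc l) 1

/-- `π_h` on a basis tuple, with conjugator `r`. -/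
def pih {G : Type*} [Group G] (h : G) (p : G → G) (r : G) (l : List G) : List G :=
  let m := ((l.scanl (· * ·) r).tail).map p
  ((m.getLastD 1)⁻¹ * h * m.headD 1) :: List.zipWith (fun a b => a⁻¹ * b) m.dropLast m.tail

set_option linter.unusedSectionVars false
set_option linter.unusedVariables false

namespace S19
variable {G : Type*} [Group G]

def S (r : G) (l : List G) : List G := (l.scanl (· * ·) r).tail
def Q (m : List G) : List G := List.zipWith (fun a b => a⁻¹ * b) m.dropLast m.tail

@[simp] lemma S_nil (r : G) : S r [] = [] := rfl
@[simp] lemma S_cons (r x : G) (l : List G) : S r (x :: l) = (r * x) :: S (r * x) l := by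
  cases l <;> simp [S, List.scanl_cons]

@[simp] lemma length_S (r : G) (l : List G) : (S r l).length = l.length := by
  induction l generalizing r with
  | nil => rfl
  | cons x t ih => simp [ih]

@[simp] lemma Q_nil : Q ([] : List G) = [] := rfl
@[simp] lemma Q_single (x : G) : Q [x] = [] := rfl
@[simp] lemma Q_cons_cons (x y : G) (m : List G) :
    Q (x :: y :: m) = (x⁻¹ * y) :: Q (y :: m) := rfl

@[simp] lemma length_Q (m : List G) : (Q m).length = m.length - 1 := by
  simp [Q]

@[simp] lemma mergeAt_cons_succ (x : G) (l : List G) (j : ℕ) :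
    mergeAt (x :: l) (j + 1) = x :: mergeAt l j := by
  simp [mergeAt]

lemma mergeAt_zero (x y : G) (l : List G) : mergeAt (x :: y :: l) 0 = (x * y) :: l := rfl

lemma S_map_mul (a r : G) (l : List G) : S (a * r) l = (S r l).map (a * ·) := by
  induction l generalizing r with
  | nil => rfl
  | cons x t ih => simp [mul_assoc, ih]

lemma S_mergeAt (r : G) (l : List G) (j : ℕ) (hj : j + 2 ≤ l.length) :
    S r (mergeAt l j) = (S r l).eraseIdx j := by
  induction j generalizing l r with
  | zero =>
    match l with
    | x :: y :: t => simp [mergeAt_zero, mul_assoc]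
  | succ j ih =>
    match l with
    | x :: t =>
      simp only [mergeAt_cons_succ, S_cons, List.eraseIdx_cons_succ]
      rw [ih]
      simpa using hj

lemma S_dropLast (r : G) (l : List G) : S r l.dropLast = (S r l).dropLast := by
  induction l generalizing r with
  | nil => rfl
  | cons x t ih =>
    cases t with
    | nil => rfl
    | cons y t' => simp [ih, List.dropLast_cons_of_ne_nil]

end S19
namespace S19
variable {G : Type*} [Group G]

lemma Q_eraseIdx (m : List G) (j : ℕ) (hj : j + 3 ≤ m.length) :
    mergeAt (Q m) j = Q (m.eraseIdx (j + 1)) := by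
  induction j generalizing m with
  | zero =>
    match m with
    | x :: y :: z :: t =>
      simp [mergeAt_zero, mul_assoc]
  | succ j ih =>
    match m with
    | x :: y :: t =>
      have h3 : j + 3 ≤ (y :: t).length := by simpa using hj
      cases j with
      | zero =>
        match t with
        | z :: w :: t' => simp [mergeAt_zero, mul_assoc]
      | succ j' =>
        simp only [Q_cons_cons, mergeAt_cons_succ, List.eraseIdx_cons_succ]
        rw [ih _ h3]
        match t, h3 with
        | z :: t', _ => simp

lemma Q_dropLast (m : List G) : (Q m).dropLast = Q m.dropLast := by
  induction m with
  | nil => rfl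
  | cons x t ih =>
    cases t with
    | nil => rfl
    | cons y t' =>
      cases t' with
      | nil => rfl
      | cons z t'' =>
        rw [show Q (x :: y :: z :: t'') = x⁻¹ * y :: Q (y :: z :: t'') from rfl,
            List.dropLast_cons_of_ne_nil (by simp [Q]), ih]
        simp [List.dropLast_cons_of_ne_nil]

lemma Q_map_mul (a : G) (m : List G) : Q (m.map (a * ·)) = Q m := by
  unfold Q
  rw [← List.map_dropLast, ← List.map_tail, List.zipWith_map]
  simp [mul_assoc]

end S19
namespace S19
variable {G : Type*} [Group G]

lemma getLastD_irrel (m : List G) (hm : m ≠ []) (d d' : G) : m.getLastD d = m.getLastD d' := by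
  cases m with
  | nil => exact absurd rfl hm
  | cons x t =>
    rw [List.getLastD_eq_getLast?, List.getLastD_eq_getLast?,
      List.getLast?_eq_getLast hm]
    rfl

lemma getLastD_eraseIdx (m : List G) (j : ℕ) (hj : j + 2 ≤ m.length) (d : G) :
    (m.eraseIdx j).getLastD d = m.getLastD d := by
  induction j generalizing m d with
  | zero =>
    match m with
    | x :: y :: t => simp [List.getLastD_cons]
  | succ j ih =>
    match m with
    | x :: t =>
      simp only [List.eraseIdx_cons_succ, List.getLastD_cons]
      exact ih t (by simpa using hj) x

lemma headD_eraseIdx_succ (m : List G) (j : ℕ) (hm : m ≠ []) (d : G) :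
    (m.eraseIdx (j + 1)).headD d = m.headD d := by
  cases m with
  | nil => exact absurd rfl hm
  | cons x t => simp

lemma core_merge (m : List G) (j : ℕ) (hj : j + 2 ≤ m.length) (y : G) :
    mergeAt ((y * m.headD 1) :: Q m) j = (y * (m.eraseIdx j).headD 1) :: Q (m.eraseIdx j) := by
  cases j with
  | zero =>
    match m with
    | a :: b :: t =>
      rw [show Q (a :: b :: t) = a⁻¹ * b :: Q (b :: t) from rfl, mergeAt_zero]
      simp [mul_assoc]
  | succ j =>
    have h1 : mergeAt ((y * m.headD 1) :: Q m) (j + 1) = (y * m.headD 1) :: mergeAt (Q m) j :=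
      mergeAt_cons_succ _ _ _
    rw [h1, Q_eraseIdx m j hj, headD_eraseIdx_succ m j (by rintro rfl; simp at hj) 1]

lemma Q_getLastD (m : List G) (hm : 2 ≤ m.length) (d : G) :
    (Q m).getLastD d = (m.dropLast.getLastD 1)⁻¹ * m.getLastD 1 := by
  induction m generalizing d with
  | nil => simp at hm
  | cons x t ih =>
    match t with
    | [y] => simp [List.getLastD_cons]
    | y :: z :: t' =>
      rw [show Q (x :: y :: z :: t') = x⁻¹ * y :: Q (y :: z :: t') from rfl]
      rw [List.getLastD_cons, ih (by simp) _]
      have hd : (y :: z :: t').dropLast ≠ [] := by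
        rw [List.dropLast_cons_of_ne_nil (by simp)]; simp
      have e1 : (x :: y :: z :: t').dropLast.getLastD 1 = (y :: z :: t').dropLast.getLastD 1 := by
        rw [List.dropLast_cons_of_ne_nil (by simp), List.getLastD_cons]
        exact getLastD_irrel _ hd _ _
      have e2 : (x :: y :: z :: t').getLastD 1 = (y :: z :: t').getLastD 1 := by
        rw [List.getLastD_cons]
        exact getLastD_irrel _ (by simp) _ _
      rw [e1, e2]

lemma prod_mergeAt (l : List G) (j : ℕ) (hj : j + 2 ≤ l.length) :
    (mergeAt l j).prod = l.prod := by
  induction j generalizing l with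
  | zero =>
    match l with
    | x :: y :: t => rw [mergeAt_zero]; simp [mul_assoc]
  | succ j ih =>
    match l with
    | x :: t =>
      rw [mergeAt_cons_succ]
      simp only [List.prod_cons]
      rw [ih t (by simpa using hj)]

lemma prod_dropLast (t : List G) (ht : t ≠ []) (d : G) :
    t.prod = t.dropLast.prod * t.getLastD d := by
  conv_lhs => rw [← List.dropLast_append_getLast ht]
  rw [List.prod_append, List.getLastD_eq_getLast?, List.getLast?_eq_getLast ht]
  simp

lemma prod_cyc (l : List G) (hl : 2 ≤ l.length) :
    (cyc l).prod = (l.getLastD 1) * l.prod * (l.getLastD 1)⁻¹ := by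
  match l with
  | a :: t =>
    have ht : t ≠ [] := by rintro rfl; simp at hl
    rw [cyc]
    simp only [List.headD_cons, List.tail_cons, List.prod_cons, List.getLastD_cons]
    rw [prod_dropLast t ht a]
    group

end S19

namespace S19
variable {G : Type*} [Group G]

lemma pih_def (h : G) (p : G → G) (r : G) (l : List G) :
    pih h p r l = (((S r l).map p).getLastD 1)⁻¹ * h * ((S r l).map p).headD 1
      :: Q ((S r l).map p) := rfl

lemma pih_map (h : G) (p : G → G)
    (pmul : ∀ a g, a * h = h * a → p (a * g) = a * p g)
    (a r : G) (ha : a * h = h * a) (l : List G) : pih h p (a * r) l = pih h p r l := by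
  rcases eq_or_ne l [] with rfl | hl
  · rfl
  · rw [pih_def, pih_def, S_map_mul]
    have hmap : ((S r l).map (a * ·)).map p = ((S r l).map p).map (a * ·) := by
      rw [List.map_map, List.map_map]
      exact List.map_congr_left (fun x _ => pmul a x ha)
    rw [hmap, Q_map_mul]
    have hm : (S r l).map p ≠ [] := by
      have : ((S r l).map p).length = l.length := by simp
      intro hc; rw [hc] at this; exact hl (List.length_eq_zero_iff.mp this.symm)
    set m := (S r l).map p with hmdef
    clear_value m
    have h1 : (m.map (a * ·)).headD 1 = a * m.headD 1 := by
      match m, hm with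
      | x :: t, _ => simp
    have h2 : (m.map (a * ·)).getLastD 1 = a * m.getLastD 1 := by
      rw [List.getLastD_eq_getLast?, List.getLast?_map, List.getLastD_eq_getLast?,
        List.getLast?_eq_getLast hm]
      simp
    have key : a⁻¹ * h * a = h := by rw [mul_assoc, ← ha]; group
    rw [h1, h2]
    congr 1
    rw [mul_inv_rev]
    calc (m.getLastD 1)⁻¹ * a⁻¹ * h * (a * m.headD 1)
        = (m.getLastD 1)⁻¹ * (a⁻¹ * h * a) * m.headD 1 := by group
      _ = (m.getLastD 1)⁻¹ * h * m.headD 1 := by rw [key]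

lemma pih_indep (h : G) (p : G → G)
    (pmul : ∀ a g, a * h = h * a → p (a * g) = a * p g)
    {r r' : G} {l : List G} (h1 : l.prod = r⁻¹ * h * r) (h2 : l.prod = r'⁻¹ * h * r') :
    pih h p r l = pih h p r' l := by
  have e : r⁻¹ * h * r = r'⁻¹ * h * r' := h1.symm.trans h2
  have key : r * (r'⁻¹ * h * r') * r⁻¹ = h := by rw [← e]; group
  have ha : (r * r'⁻¹) * h = h * (r * r'⁻¹) := by
    conv_rhs => rw [← key]
    group
  have := pih_map h p pmul (r * r'⁻¹) r' ha l
  rwa [inv_mul_cancel_right] at this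

lemma map_eraseIdx (p : G → G) (l : List G) (j : ℕ) :
    (l.eraseIdx j).map p = (l.map p).eraseIdx j := by
  induction l generalizing j with
  | nil => simp
  | cons x t ih => cases j <;> simp [ih]

lemma S_ne_nil {r : G} {t : List G} (ht : t ≠ []) : S r t ≠ [] := by
  intro hc
  apply ht
  have := length_S r t
  rw [hc] at this
  exact List.length_eq_zero_iff.mp this.symm

lemma pih_mergeAt (h : G) (p : G → G) (r : G) (l : List G) (j : ℕ) (hj : j + 2 ≤ l.length) :
    pih h p r (mergeAt l j) = mergeAt (pih h p r l) j := by
  rw [pih_def, pih_def, S_mergeAt r l j hj, map_eraseIdx]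
  set m := (S r l).map p with hmdef
  have hlen : m.length = l.length := by simp [hmdef]
  have hj' : j + 2 ≤ m.length := by omega
  rw [core_merge m j hj' ((m.getLastD 1)⁻¹ * h), getLastD_eraseIdx m j hj' 1]

lemma headD_dropLast (m : List G) (hm : 2 ≤ m.length) (d : G) :
    (m.dropLast.headD d) = m.headD d := by
  match m with
  | x :: y :: t => rw [List.dropLast_cons_of_ne_nil (by simp)]; rfl

lemma pih_cyc (h : G) (p : G → G) (r : G) (l : List G) (hl : 2 ≤ l.length) :
    pih h p (r * (l.getLastD 1)⁻¹) (cyc l) = cyc (pih h p r l) := by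
  match l with
  | a :: t =>
    have ht : t ≠ [] := by rintro rfl; simp at hl
    have hScyc : S (r * ((a :: t).getLastD 1)⁻¹) (cyc (a :: t)) = (S r (a :: t)).dropLast := by
      rw [cyc]
      simp only [List.headD_cons, List.tail_cons, List.getLastD_cons]
      rw [S_cons]
      have e1 : r * (t.getLastD a)⁻¹ * (t.getLastD a * a) = r * a := by group
      rw [e1, S_dropLast, S_cons, List.dropLast_cons_of_ne_nil (S_ne_nil ht)]
    rw [pih_def, pih_def, hScyc, List.map_dropLast]
    set m := (S r (a :: t)).map p with hmdef
    clear_value m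
    have hm2 : 2 ≤ m.length := by
      rw [hmdef]; simpa using hl
    simp only [cyc, List.getLastD_cons, List.headD_cons, List.tail_cons]
    rw [Q_getLastD m hm2, Q_dropLast, headD_dropLast m hm2]
    congr 1
    group

end S19

open S19 in
/-- `π_h` is a chain map, `b ∘ π_h = π_h ∘ b`, on the subcomplex of tuples
with entry-product conjugate to `h`.  Here `p_h(g) = g · s(Z_h·g)⁻¹` for a section `s` of
`Z_h\G` normalized by `s(Z_h) = 1`, and `R` chooses for each tuple a conjugator witnessing
the conjugacy of its product with `h` (by independence of the conjugator, `π_h` does not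
depend on this choice; for the cyclic face one uses the conjugator `r g_n⁻¹`). -/
theorem statement19 {G : Type*} [Group G] (h : G) (s : G → G)
    (hcoset : ∀ g : G, (g * (s g)⁻¹) * h = h * (g * (s g)⁻¹))
    (hconst : ∀ g₁ g₂ : G, (g₁ * g₂⁻¹) * h = h * (g₁ * g₂⁻¹) → s g₁ = s g₂)
    (hs1 : ∀ a : G, a * h = h * a → s a = 1)
    (R : List G → G)
    (hR : ∀ l : List G, IsConj h l.prod → l.prod = (R l)⁻¹ * h * (R l)) :
    ∀ (n : ℕ) (l : List G), l.length = n + 2 → IsConj h l.prod →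
      hb (pih h (fun g => g * (s g)⁻¹) (R l) l)
        = Finsupp.mapDomain (fun m => pih h (fun g => g * (s g)⁻¹) (R m) m) (hb l) := by
  
  intro n l hlen hconj
  set p := fun g : G => g * (s g)⁻¹ with hp
  have pmul : ∀ a g : G, a * h = h * a → p (a * g) = a * p g := by
    intro a g hac
    have hs : s (a * g) = s g := hconst (a * g) g (by rwa [mul_inv_cancel_right])
    simp only [hp, hs, mul_assoc]
  have hprod := hR l hconj
  have hlp : (pih h p (R l) l).length = n + 2 := by
    rw [pih_def]
    simp [hlen]
  have hsum : ∀ (F : List G → List G) (v : ℕ → List G →₀ ℂ) (t : Finset ℕ),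
      Finsupp.mapDomain F (∑ j ∈ t, v j) = ∑ j ∈ t, Finsupp.mapDomain F (v j) :=
    fun F v t => map_sum (Finsupp.mapDomain.addMonoidHom F) v t
  simp only [hb, hlp, hlen, Nat.add_sub_cancel, Finsupp.mapDomain_add, hsum,
    Finsupp.mapDomain_smul, Finsupp.mapDomain_single]
  congr 1
  · apply Finset.sum_congr rfl
    intro j hj
    have hj2 : j + 2 ≤ l.length := by
      rw [hlen]; have := Finset.mem_range.mp hj; omega
    congr 1
    rw [← pih_mergeAt h p (R l) l j hj2]
    have hpm : (mergeAt l j).prod = l.prod := prod_mergeAt l j hj2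
    exact congrArg (fun x => Finsupp.single x (1 : ℂ)) <| pih_indep h p pmul (by rw [hpm]; exact hprod)
      (hR (mergeAt l j) (by rw [hpm]; exact hconj))
  · congr 1
    set g := l.getLastD 1 with hg
    have hcycprod : (cyc l).prod = ((R l) * g⁻¹)⁻¹ * h * ((R l) * g⁻¹) := by
      rw [prod_cyc l (by rw [hlen]; omega), ← hg, hprod]
      group
    have hconj' : IsConj h (cyc l).prod :=
      isConj_iff.mpr ⟨((R l) * g⁻¹)⁻¹, by rw [hcycprod]; group⟩
    rw [← pih_cyc h p (R l) l (by rw [hlen]; omega)]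
    exact congrArg (fun x => Finsupp.single x (1 : ℂ))
      (pih_indep h p pmul (hR (cyc l) hconj') hcycprod).symm
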